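/- For all x and n ≥ 0, the identity ∑_{k=0}^{n+1} binom(x+k, n+1) A_λ(n+1,k) = (x + nλ) · ∑_{k=0}^{n} binom(x+k, n) A_λ(n,k) holds, where binom denotes the generalized binomial coefficient in x. -/

import Mathlib

open Finset PowerSeries

/-- Degenerate falling factorial `(x)_{n,λ} = x(x-λ)⋯(x-(n-1)λ)`. -/
noncomputable def dfall (l x : ℝ) (n : ℕ) : ℝ := ∏ i ∈ Finset.range n, (x - i * l)

/-- Degenerate Eulerian number `A_λ(n,k) = ∑_{i=0}^k C(n+1,i)(-1)^i (k-i+1)_{n,λ}`. -/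
noncomputable def degEulerianNum (l : ℝ) (n k : ℕ) : ℝ :=
  ∑ i ∈ Finset.range (k+1), ((n+1).choose i : ℝ) * (-1)^i * dfall l ((k : ℝ) - i + 1) n

/-- Degenerate Eulerian polynomial `A_{n,λ}(x) = ∑_{k=0}^n A_λ(n,k) x^k`. -/
noncomputable def degEulerianPoly (l : ℝ) (n : ℕ) (x : ℝ) : ℝ :=
  ∑ k ∈ Finset.range (n+1), degEulerianNum l n k * x^k

/-- Generalized binomial coefficient `binom(y,m) = y(y-1)⋯(y-m+1)/m!`. -/
noncomputable def genBinom (y : ℝ) (m : ℕ) : ℝ :=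
  (∏ i ∈ Finset.range m, (y - i)) / m.factorial

/-- Degenerate exponential `e_λ^x(t) = ∑_k (x)_{k,λ} t^k/k!` as a formal power series. -/
noncomputable def degExp (l x : ℝ) : PowerSeries ℝ :=
  PowerSeries.mk fun k => dfall l x k / k.factorial

/-- Degenerate Stirling number of the second kind (explicit formula). -/
noncomputable def degStirling2 (l : ℝ) (n k : ℕ) : ℝ :=
  (-1)^k / k.factorial * ∑ j ∈ Finset.range (k+1), (-1)^j * (k.choose j : ℝ) * dfall l j n

lemma dfall_succ (l x : ℝ) (n : ℕ) : dfall l x (n + 1) = dfall l x n * (x - n * l) := by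
  simp [dfall, Finset.prod_range_succ]

lemma choose_id (n i : ℕ) :
    ((n+1).choose (i+1) : ℝ) * ((i:ℝ)+1) = ((n+1).choose i : ℝ) * ((n:ℝ)+1-i) := by
  rcases le_or_gt i (n+1) with h | h
  · have h1 : (n+1).choose (i+1) * (i+1) = (n+1).choose i * ((n+1) - i) :=
      Nat.choose_succ_right_eq (n+1) i
    have h2 := congrArg (Nat.cast (R := ℝ)) h1
    push_cast [h] at h2
    linarith [h2]
  · have h2 : (n+1).choose i = 0 := Nat.choose_eq_zero_of_lt h
    have h3 : (n+1).choose (i+1) = 0 := Nat.choose_eq_zero_of_lt (by omega)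
    simp [h2, h3]

lemma key_sum (n k : ℕ) (D : ℕ → ℝ) :
    ∑ i ∈ range (k+2), ((n+1).choose i : ℝ) * (-1)^i * (-(i:ℝ)) * D i
      = ∑ i ∈ range (k+1), ((n+1).choose i : ℝ) * (-1)^i * ((n:ℝ)+1-i) * D (i+1) := by
  rw [Finset.sum_range_succ']
  simp only [Nat.cast_zero, neg_zero, mul_zero, zero_mul, add_zero]
  apply Finset.sum_congr rfl
  intro i _
  push_cast
  linear_combination ((-1:ℝ)^i * D (i+1)) * choose_id n i

lemma degE_rec (l : ℝ) (n k : ℕ) :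
    degEulerianNum l (n+1) (k+1)
      = ((n:ℝ) - k + n * l) * degEulerianNum l n k
        + ((k:ℝ) + 2 - n * l) * degEulerianNum l n (k+1) := by
  set D : ℕ → ℝ := fun i => dfall l ((k:ℝ) + 2 - i) n with hDdef
  have hD : ∀ i : ℕ, dfall l ((k:ℝ) + 2 - i) n = D i := fun i => rfl
  -- canonical forms
  have hL : degEulerianNum l (n+1) (k+1)
      = ∑ i ∈ range (k+2), ((n+2).choose i : ℝ) * (-1)^i * (D i * ((k:ℝ)+2-i-n*l)) := by
    unfold degEulerianNum
    apply Finset.sum_congr rfl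
    intro i _
    have ha : ((k+1 : ℕ) : ℝ) - i + 1 = (k:ℝ) + 2 - i := by push_cast; ring
    rw [ha, dfall_succ, hD]
  have hA : degEulerianNum l n k
      = ∑ i ∈ range (k+1), ((n+1).choose i : ℝ) * (-1)^i * D (i+1) := by
    unfold degEulerianNum
    apply Finset.sum_congr rfl
    intro i _
    have ha : (k : ℝ) - i + 1 = (k:ℝ) + 2 - ((i:ℕ)+1 : ℕ) := by push_cast; ring
    rw [ha, hD]
  have hB : degEulerianNum l n (k+1)
      = ∑ i ∈ range (k+2), ((n+1).choose i : ℝ) * (-1)^i * D i := by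
    unfold degEulerianNum
    apply Finset.sum_congr rfl
    intro i _
    have ha : ((k+1:ℕ) : ℝ) - i + 1 = (k:ℝ) + 2 - i := by push_cast; ring
    rw [ha, hD]
  rw [hL, hA, hB]
  -- abbreviations for atomic sums
  set S2a : ℝ := ∑ i ∈ range (k+2), ((n+1).choose i : ℝ) * (-1)^i * D i with hS2a
  set S2b : ℝ := ∑ i ∈ range (k+1), ((n+1).choose i : ℝ) * (-1)^i * D (i+1) with hS2b
  set T : ℝ := ∑ i ∈ range (k+2), ((n+1).choose i : ℝ) * (-1)^i * (i:ℝ) * D i with hT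
  set U : ℝ := ∑ i ∈ range (k+1), ((n+1).choose i : ℝ) * (-1)^i * (i:ℝ) * D (i+1) with hU
  set A1 : ℝ := ∑ i ∈ range (k+1), ((n+1).choose i : ℝ) * (-1)^i * (D (i+1) * ((k:ℝ)+1-i-n*l)) with hA1
  set A2 : ℝ := ∑ i ∈ range (k+2), ((n+1).choose i : ℝ) * (-1)^i * (D i * ((k:ℝ)+2-i-n*l)) with hA2
  have H2 : A1 = ((k:ℝ)+1-n*l) * S2b - U := by
    rw [hA1, hS2b, hU, Finset.mul_sum, ← Finset.sum_sub_distrib]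
    exact Finset.sum_congr rfl fun i _ => by ring
  have H3 : A2 = ((k:ℝ)+2-n*l) * S2a - T := by
    rw [hA2, hS2a, hT, Finset.mul_sum, ← Finset.sum_sub_distrib]
    exact Finset.sum_congr rfl fun i _ => by ring
  have H4 : ((n:ℝ)+1) * S2b - U = -T := by
    have k1 : ∑ i ∈ range (k+2), ((n+1).choose i : ℝ) * (-1)^i * (-(i:ℝ)) * D i
        = ∑ i ∈ range (k+1), ((n+1).choose i : ℝ) * (-1)^i * ((n:ℝ)+1-i) * D (i+1) :=
      key_sum n k D
    have e1 : ∑ i ∈ range (k+2), ((n+1).choose i : ℝ) * (-1)^i * (-(i:ℝ)) * D i = -T := by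
      rw [hT, ← Finset.sum_neg_distrib]
      exact Finset.sum_congr rfl fun i _ => by ring
    have e2 : ∑ i ∈ range (k+1), ((n+1).choose i : ℝ) * (-1)^i * ((n:ℝ)+1-i) * D (i+1)
        = ((n:ℝ)+1) * S2b - U := by
      rw [hS2b, hU, Finset.mul_sum, ← Finset.sum_sub_distrib]
      exact Finset.sum_congr rfl fun i _ => by ring
    rw [← e1, ← e2, k1]
  have H1 : ∑ i ∈ range (k+2), ((n+2).choose i : ℝ) * (-1)^i * (D i * ((k:ℝ)+2-i-n*l))
      = -A1 + A2 := by
    rw [hA2, Finset.sum_range_succ',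
      Finset.sum_range_succ' (fun i => ((n+1).choose i : ℝ) * (-1)^i * (D i * ((k:ℝ)+2-i-n*l))) (k+1)]
    have step : ∑ i ∈ range (k+1),
          ((n+2).choose (i+1) : ℝ) * (-1)^(i+1) * (D (i+1) * ((k:ℝ)+2-(↑(i+1):ℝ)-n*l))
        + A1
        = ∑ i ∈ range (k+1),
          ((n+1).choose (i+1) : ℝ) * (-1)^(i+1) * (D (i+1) * ((k:ℝ)+2-(↑(i+1):ℝ)-n*l)) := by
      rw [hA1, ← Finset.sum_add_distrib]
      apply Finset.sum_congr rfl
      intro i _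
      have hp : ((n+2).choose (i+1) : ℝ) = ((n+1).choose i : ℝ) + ((n+1).choose (i+1) : ℝ) := by
        exact_mod_cast Nat.choose_succ_succ (n+1) i
      rw [hp]
      push_cast
      ring
    push_cast at step ⊢
    simp only [Nat.choose_zero_right, Nat.cast_one, pow_zero, one_mul]
    linarith [step]
  linear_combination H1 - H2 + H3 - H4

lemma degE_zero0 (l : ℝ) (n : ℕ) : degEulerianNum l n 0 = dfall l 1 n := by
  simp [degEulerianNum]

lemma degE_zero (l : ℝ) (n : ℕ) :
    degEulerianNum l (n+1) 0 = (1 - (n:ℝ) * l) * degEulerianNum l n 0 := by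
  rw [degE_zero0, degE_zero0, dfall_succ]
  ring

lemma alt0 (m : ℕ) : ∑ i ∈ range (m+2), ((Nat.choose 1 i : ℝ)) * (-1)^i = 0 := by
  rw [Finset.sum_range_succ', Finset.sum_range_succ']
  have hz : ∀ i ∈ range m, ((Nat.choose 1 (i+1+1) : ℝ)) * (-1)^(i+1+1) = 0 := by
    intro i _
    have : Nat.choose 1 (i+2) = 0 := Nat.choose_eq_zero_of_lt (by omega)
    simp [this]
  rw [Finset.sum_congr rfl hz]
  simp

lemma degE_vanish (l : ℝ) : ∀ n k : ℕ, n < k → degEulerianNum l n k = 0 := by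
  intro n
  induction n with
  | zero =>
    intro k hk
    obtain ⟨m, rfl⟩ : ∃ m, k = m + 1 := ⟨k - 1, by omega⟩
    have : degEulerianNum l 0 (m+1) = ∑ i ∈ range (m+2), ((Nat.choose 1 i : ℝ)) * (-1)^i := by
      unfold degEulerianNum
      apply Finset.sum_congr rfl
      intro i _
      simp [dfall]
    rw [this, alt0]
  | succ n ih =>
    intro k hk
    obtain ⟨m, rfl⟩ : ∃ m, k = m + 1 := ⟨k - 1, by omega⟩
    rw [degE_rec, ih m (by omega), ih (m+1) (by omega)]
    ring

lemma gb_key (x l : ℝ) (n k : ℕ) :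
    genBinom (x + k + 1) (n+1) * ((n:ℝ) - k + n*l) + genBinom (x + k) (n+1) * ((k:ℝ) + 1 - n*l)
      = (x + n*l) * genBinom (x + k) n := by
  have p1 : ∏ i ∈ range (n+1), (x + k + 1 - i) = (x + k + 1) * ∏ i ∈ range n, (x + k - i) := by
    rw [Finset.prod_range_succ']
    rw [mul_comm]
    congr 1
    · norm_num
    · apply Finset.prod_congr rfl
      intro i _
      push_cast
      ring
  have p2 : ∏ i ∈ range (n+1), (x + k - i) = (∏ i ∈ range n, (x + k - i)) * (x + k - n) :=
    Finset.prod_range_succ _ _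
  have hf : ((n+1).factorial : ℝ) = ((n:ℝ)+1) * n.factorial := by
    rw [Nat.factorial_succ]; push_cast; ring
  have hnf : (n.factorial : ℝ) ≠ 0 := by positivity
  have hnf1 : ((n:ℝ)+1) ≠ 0 := by positivity
  unfold genBinom
  rw [p1, p2, hf]
  field_simp
  ring

/-- `∑_{k=0}^{n+1} binom(x+k, n+1) A_λ(n+1,k)
 = (x + nλ) ∑_{k=0}^n binom(x+k, n) A_λ(n,k)`. -/
theorem stmt9 (l : ℝ) (n : ℕ) (x : ℝ) :
    ∑ k ∈ Finset.range (n + 2), genBinom (x + k) (n + 1) * degEulerianNum l (n + 1) k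
      = (x + n * l) * ∑ k ∈ Finset.range (n + 1), genBinom (x + k) n * degEulerianNum l n k := by
  have hvan : degEulerianNum l n (n+1) = 0 := degE_vanish l n (n+1) (by omega)
  set g : ℕ → ℝ := fun k => genBinom (x + k) (n+1) * (((k:ℝ) + 1 - n*l) * degEulerianNum l n k)
    with hg
  have split : ∑ k ∈ range (n+1), genBinom (x + ((k+1:ℕ):ℝ)) (n+1) * degEulerianNum l (n+1) (k+1)
      = ∑ k ∈ range (n+1),
          genBinom (x + (k:ℝ) + 1) (n+1) * (((n:ℝ) - k + n*l) * degEulerianNum l n k)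
        + ∑ k ∈ range (n+1), g (k+1) := by
    rw [← Finset.sum_add_distrib]
    apply Finset.sum_congr rfl
    intro k _
    simp only [hg]
    rw [degE_rec l n k]
    push_cast
    ring
  have shift : ∑ k ∈ range (n+1), g (k+1) = ∑ k ∈ range (n+1), g k - g 0 := by
    have h1 : ∑ k ∈ range (n+2), g k = ∑ k ∈ range (n+1), g (k+1) + g 0 :=
      Finset.sum_range_succ' g (n+1)
    have h2 : ∑ k ∈ range (n+2), g k = ∑ k ∈ range (n+1), g k + g (n+1) :=
      Finset.sum_range_succ g (n+1)
    have h3 : g (n+1) = 0 := by simp only [hg]; rw [hvan]; ring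
    rw [h3] at h2
    linarith
  have hb : genBinom (x + ((0:ℕ):ℝ)) (n+1) * degEulerianNum l (n+1) 0 = g 0 := by
    simp only [hg]
    rw [degE_zero]
    push_cast
    ring
  have final : ∀ k ∈ range (n+1),
      genBinom (x + (k:ℝ) + 1) (n+1) * (((n:ℝ) - k + n*l) * degEulerianNum l n k) + g k
        = (x + n*l) * (genBinom (x + k) n * degEulerianNum l n k) := by
    intro k _
    simp only [hg]
    linear_combination (degEulerianNum l n k) * gb_key x l n k
  rw [Finset.sum_range_succ', split, shift, hb, Finset.mul_sum]
  rw [show ∀ a b c : ℝ, a + (b - c) + c = a + b from fun a b c => by ring]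
  rw [← Finset.sum_add_distrib]
  exact Finset.sum_congr rfl final
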